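/- arXiv:1101.3797 — 3 statements merged into one kernel-verified Lean document; each statement's English description precedes it below -/
import Mathlib

section
/- Let Z be a k-dimensional irreducible projective subvariety of P^n over the complex numbers, with ideal sheaf I_Z. Then for every t ≥ 1, the codimension of H^0(P^n, I_Z(t)) in H^0(P^n, O(t)) is at least binomial(t+k, k). -/
/-!
STATEMENT 0: Let `Z ⊆ ℙⁿ(ℂ)` be a `k`-dimensional irreducible projective
subvariety with ideal sheaf `I_Z`.  For every `t ≥ 1` the codimension of
`H⁰(ℙⁿ, I_Z(t))` in `H⁰(ℙⁿ, O(t))` is at least `binom (t+k) k`.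

Encoding: `Z` is given by its homogeneous prime ideal `P` in the homogeneous
coordinate ring `ℂ[x₀,…,xₙ]`; irreducibility = `P` prime; `dim Z = k` means the
affine cone has Krull dimension `k + 1`.  `H⁰(ℙⁿ, O(t))` is the space of
degree-`t` homogeneous forms and `H⁰(ℙⁿ, I_Z(t))` is its intersection with
`P`; the codimension in question is therefore the dimension of the image of
the degree-`t` forms in the quotient ring `ℂ[x]/P` (the image of the
restriction map `H⁰(ℙⁿ, O(t)) → H⁰(Z, O_Z(t))`).
-/

noncomputable section
open MvPolynomial

set_option linter.unusedSectionVars false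
set_option linter.unusedVariables false

section Auxiliary
open Algebra

theorem cons_indep {K B : Type*} [Field K] [CommRing B] [Algebra K B] {m : ℕ}
    (I J : Ideal B) (hI : I.IsPrime) (hIJ : I ≤ J)
    {b : B} (hbJ : b ∈ J) (hbI : b ∉ I) {v : Fin m → B}
    (hv : AlgebraicIndependent K (fun i => Ideal.Quotient.mk J (v i))) :
    AlgebraicIndependent K (fun i => Ideal.Quotient.mk I ((Fin.cons b v : Fin (m+1) → B) i)) := by
  haveI := hI
  set q : B →+* B ⧸ I := Ideal.Quotient.mk I with hq
  have hcomm : ∀ (p : MvPolynomial (Fin m) K),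
      Commute ((MvPolynomial.aeval (fun i => q (v i)) : MvPolynomial (Fin m) K →ₐ[K] B ⧸ I) p)
        (q b) := fun p => Commute.all _ _
  set Φ : Polynomial (MvPolynomial (Fin m) K) →ₐ[K] B ⧸ I :=
    Polynomial.eval₂AlgHom (MvPolynomial.aeval (fun i => q (v i))) (q b) hcomm with hΦ
  have key : ∀ p : MvPolynomial (Fin (m+1)) K,
      Φ ((MvPolynomial.finSuccEquiv K m) p)
        = MvPolynomial.aeval (fun i => q ((Fin.cons b v : Fin (m+1) → B) i)) p := by
    intro p
    have h2 : (Φ.comp ((MvPolynomial.finSuccEquiv K m) : MvPolynomial (Fin (m+1)) K →ₐ[K]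
        Polynomial (MvPolynomial (Fin m) K)))
        = MvPolynomial.aeval (fun i => q ((Fin.cons b v : Fin (m+1) → B) i)) := by
      apply MvPolynomial.algHom_ext
      intro i
      refine Fin.cases ?_ ?_ i
      · simp [Φ, MvPolynomial.finSuccEquiv_X_zero]
      · intro j
        simp [Φ, MvPolynomial.finSuccEquiv_X_succ]
    exact congrFun (congrArg (fun f => f.toFun) h2) p
  -- the algebra map ρ : B⧸I → B⧸J
  set ρ : B ⧸ I →ₐ[K] B ⧸ J := Ideal.Quotient.liftₐ I (Ideal.Quotient.mkₐ K J)
    (fun a ha => by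
      rw [Ideal.Quotient.mkₐ_eq_mk, Ideal.Quotient.eq_zero_iff_mem]; exact hIJ ha) with hρ
  have hρq : ∀ x : B, ρ (q x) = Ideal.Quotient.mk J x := fun x => by
    simp [ρ, q, Ideal.Quotient.liftₐ_apply]; rfl
  -- coefficient-0 extraction
  have hcoeff0 : ∀ g : Polynomial (MvPolynomial (Fin m) K), Φ g = 0 → g.coeff 0 = 0 := by
    intro g hg
    have h1 : ρ (Φ g) = Polynomial.eval₂ ((ρ.comp
        (MvPolynomial.aeval (fun i => q (v i)))) : MvPolynomial (Fin m) K →ₐ[K] B ⧸ J).toRingHom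
        (ρ (q b)) g := by
      simp only [Φ, Polynomial.eval₂AlgHom_apply]
      exact Polynomial.hom_eval₂ g _ ρ.toRingHom (q b)
    rw [hg, map_zero] at h1
    rw [hρq, Ideal.Quotient.eq_zero_iff_mem.mpr hbJ] at h1
    rw [Polynomial.eval₂_at_zero] at h1
    have h2 : (ρ.comp (MvPolynomial.aeval (fun i => q (v i)))) =
        MvPolynomial.aeval (fun i => Ideal.Quotient.mk J (v i)) := by
      apply MvPolynomial.algHom_ext; intro i; simp [hρq]
    rw [show ((ρ.comp (MvPolynomial.aeval fun i => q (v i))) :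
        MvPolynomial (Fin m) K →ₐ[K] B ⧸ J).toRingHom (g.coeff 0)
        = MvPolynomial.aeval (fun i => Ideal.Quotient.mk J (v i)) (g.coeff 0) from by
        rw [← h2]; rfl] at h1
    exact hv.eq_zero_of_aeval_eq_zero _ h1.symm
  have hqb : q b ≠ 0 := fun h => hbI (Ideal.Quotient.eq_zero_iff_mem.mp h)
  rw [algebraicIndependent_iff]
  intro p hp
  rw [← key p] at hp
  suffices h : ∀ N (g : Polynomial (MvPolynomial (Fin m) K)), g.natDegree ≤ N → Φ g = 0 → g = 0 by
    have := h _ ((MvPolynomial.finSuccEquiv K m) p) le_rfl hp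
    exact (map_eq_zero_iff _ (AlgEquiv.injective _)).mp this
  intro N
  induction N with
  | zero =>
    intro g hg hΦg
    rw [Polynomial.eq_C_of_natDegree_le_zero hg, hcoeff0 g hΦg, map_zero]
  | succ N ih =>
    intro g hg hΦg
    obtain ⟨g₁, rfl⟩ := Polynomial.X_dvd_iff.mpr (hcoeff0 g hΦg)
    rcases eq_or_ne g₁ 0 with rfl | hg₁
    · rw [mul_zero]
    have hΦg₁ : Φ g₁ = 0 := by
      rw [map_mul] at hΦg
      have hXb : Φ Polynomial.X = q b := by simp [Φ]
      rw [hXb] at hΦg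
      exact (mul_eq_zero.mp hΦg).resolve_left hqb
    have hdeg : g₁.natDegree ≤ N := by
      have := Polynomial.natDegree_mul (Polynomial.X_ne_zero (R := MvPolynomial (Fin m) K)) hg₁
      rw [Polynomial.natDegree_X] at this
      omega
    rw [ih g₁ hdeg hΦg₁, mul_zero]

section
variable {K B : Type*} [Field K] [CommRing B] [Algebra K B]

theorem isAlgebraic_adjoin_iff_mvPoly {ι : Type*} {v : ι → B}
    (hv : AlgebraicIndependent K v) (x : B) :
    letI : Algebra (MvPolynomial ι K) B := (MvPolynomial.aeval v).toRingHom.toAlgebra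
    (IsAlgebraic (↥(Algebra.adjoin K (Set.range v))) x ↔ IsAlgebraic (MvPolynomial ι K) x) := by
  letI : Algebra (MvPolynomial ι K) B := (MvPolynomial.aeval v).toRingHom.toAlgebra
  have sq : RingHom.comp (algebraMap (↥(Algebra.adjoin K (Set.range v))) B)
      (hv.aevalEquiv : MvPolynomial ι K ≃+* ↥(Algebra.adjoin K (Set.range v)))
      = RingHom.comp (RingHom.id B) (algebraMap (MvPolynomial ι K) B) :=
    RingHom.ext fun p => hv.algebraMap_aevalEquiv p
  simpa using (isAlgebraic_ringHom_iff_of_comp_eq (hv.aevalEquiv) (RingHom.id B)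
    Function.injective_id sq)
end

section
variable {K L : Type*} [Field K] [Field L] [Algebra K L]

theorem isAlgebraic_intermediateField_iff_mvPoly {ι : Type*} {v : ι → L}
    (hv : AlgebraicIndependent K v) (x : L) :
    letI : Algebra (MvPolynomial ι K) L := (MvPolynomial.aeval v).toRingHom.toAlgebra
    (IsAlgebraic (↥(IntermediateField.adjoin K (Set.range v))) x ↔
      IsAlgebraic (MvPolynomial ι K) x) := by
  letI : Algebra (MvPolynomial ι K) L := (MvPolynomial.aeval v).toRingHom.toAlgebra
  have hinj : Function.Injective (algebraMap (MvPolynomial ι K) L) :=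
    algebraicIndependent_iff_injective_aeval.1 hv
  letI : Algebra (FractionRing (MvPolynomial ι K)) L :=
    (IsFractionRing.lift (K := FractionRing (MvPolynomial ι K)) hinj).toAlgebra
  haveI : IsScalarTower (MvPolynomial ι K) (FractionRing (MvPolynomial ι K)) L :=
    IsScalarTower.of_algebraMap_eq fun p => (IsFractionRing.lift_algebraMap hinj p).symm
  have step1 : IsAlgebraic (MvPolynomial ι K) x ↔
      IsAlgebraic (FractionRing (MvPolynomial ι K)) x :=
    IsFractionRing.isAlgebraic_iff (MvPolynomial ι K) (FractionRing (MvPolynomial ι K)) L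
  have sq : RingHom.comp (algebraMap (↥(IntermediateField.adjoin K (Set.range v))) L)
      ((hv.aevalEquivField :
        FractionRing (MvPolynomial ι K) ≃+* ↥(IntermediateField.adjoin K (Set.range v))))
      = RingHom.comp (RingHom.id L) (algebraMap (FractionRing (MvPolynomial ι K)) L) :=
    RingHom.ext fun p => hv.aevalEquivField_apply_coe p
  have step2 := isAlgebraic_ringHom_iff_of_comp_eq (hv.aevalEquivField) (RingHom.id L)
    Function.injective_id sq (a := x)
  simp only [RingHom.id_apply] at step2
  rw [step2, step1]
end

section
variable {K B : Type*} [Field K] [CommRing B] [IsDomain B] [Algebra K B]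

theorem closure_lemma {ι : Type*} {v : ι → B} (hv : AlgebraicIndependent K v)
    (S : Set B) (hS : Algebra.adjoin K S = ⊤)
    (hall : ∀ s ∈ S, IsAlgebraic (↥(Algebra.adjoin K (Set.range v))) s) (f : B) :
    IsAlgebraic (↥(Algebra.adjoin K (Set.range v))) f := by
  set L := FractionRing B
  set Φ : B →ₐ[K] L := IsScalarTower.toAlgHom K B L with hΦ
  have Φinj : Function.Injective Φ := IsFractionRing.injective B L
  have hv' : AlgebraicIndependent K (⇑Φ ∘ v) := hv.map' Φinj
  letI : Algebra (MvPolynomial ι K) B := (MvPolynomial.aeval v).toRingHom.toAlgebra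
  letI : Algebra (MvPolynomial ι K) L := (MvPolynomial.aeval (⇑Φ ∘ v)).toRingHom.toAlgebra
  -- MvP-level transfer between B and L
  have sq : RingHom.comp (algebraMap (MvPolynomial ι K) L)
      (RingEquiv.refl (MvPolynomial ι K))
      = RingHom.comp (Φ : B →+* L) (algebraMap (MvPolynomial ι K) B) := by
    refine RingHom.ext fun p => ?_
    show MvPolynomial.aeval (⇑Φ ∘ v) p = Φ (MvPolynomial.aeval v p)
    exact (MvPolynomial.comp_aeval_apply v Φ p).symm
  have transfer : ∀ y : B, IsAlgebraic (MvPolynomial ι K) (Φ y) ↔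
      IsAlgebraic (MvPolynomial ι K) y := fun y =>
    isAlgebraic_ringHom_iff_of_comp_eq (RingEquiv.refl (MvPolynomial ι K)) (Φ : B →+* L)
      Φinj sq
  -- the intermediate field F
  set F := IntermediateField.adjoin K (Set.range (⇑Φ ∘ v)) with hF
  have hallF : ∀ s ∈ S, (Φ s) ∈ Subalgebra.restrictScalars K (integralClosure (↥F) L) := by
    intro s hs
    have h1 : IsAlgebraic (MvPolynomial ι K) s := (isAlgebraic_adjoin_iff_mvPoly hv s).mp
      (hall s hs)
    have h2 : IsAlgebraic (MvPolynomial ι K) (Φ s) := (transfer s).mpr h1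
    have h3 : IsAlgebraic (↥(Algebra.adjoin K (Set.range (⇑Φ ∘ v)))) (Φ s) :=
      (isAlgebraic_adjoin_iff_mvPoly hv' (Φ s)).mpr h2
    have h4 : IsAlgebraic (↥F.toSubalgebra) (Φ s) :=
      IsAlgebraic.tower_top_of_subalgebra_le
        (IntermediateField.algebra_adjoin_le_adjoin K _) h3
    have h5 : IsAlgebraic (↥F) (Φ s) := h4
    exact isAlgebraic_iff_isIntegral.mp h5
  have hfC : Φ f ∈ Subalgebra.restrictScalars K (integralClosure (↥F) L) := by
    have h1 : Φ f ∈ (Algebra.adjoin K S).map Φ := by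
      rw [hS]; exact ⟨f, trivial, rfl⟩
    rw [AlgHom.map_adjoin] at h1
    refine Algebra.adjoin_le ?_ h1
    rintro _ ⟨s, hs, rfl⟩
    exact hallF s hs
  have h6 : IsAlgebraic (↥F) (Φ f) := (IsIntegral.isAlgebraic hfC)
  have h7 : IsAlgebraic (MvPolynomial ι K) (Φ f) :=
    (isAlgebraic_intermediateField_iff_mvPoly hv' (Φ f)).mp h6
  exact (isAlgebraic_adjoin_iff_mvPoly hv f).mpr ((transfer f).mp h7)
end

section
variable {K B : Type*} [Field K] [CommRing B] [IsDomain B] [Algebra K B]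

-- cons ↔ option reindexing
theorem cons_indep_iff_option {m : ℕ} (v : Fin m → B) (g : B) :
    AlgebraicIndependent K (Fin.cons g v : Fin (m+1) → B) ↔
      AlgebraicIndependent K (fun o : Option (Fin m) => o.elim g v) := by
  refine (algebraicIndependent_equiv (finSuccEquiv m).symm).symm.trans ?_
  have : (Fin.cons g v : Fin (m+1) → B) ∘ (finSuccEquiv m).symm
      = fun o : Option (Fin m) => o.elim g v := by
    funext o
    cases o with
    | none => simp
    | some j => simp
  rw [this]

theorem exists_gen_cons {m : ℕ} {v : Fin m → B} {f : B}
    (h : AlgebraicIndependent K (Fin.cons f v : Fin (m+1) → B))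
    (S : Set B) (hS : Algebra.adjoin K S = ⊤) :
    ∃ s ∈ S, AlgebraicIndependent K (Fin.cons s v : Fin (m+1) → B) := by
  have hv : AlgebraicIndependent K v := by
    have := h.comp Fin.succ (Fin.succ_injective m)
    have e : (Fin.cons f v : Fin (m+1) → B) ∘ Fin.succ = v := by
      funext i; simp
    rwa [e] at this
  by_contra hc
  push_neg at hc
  have hall : ∀ s ∈ S, IsAlgebraic (↥(Algebra.adjoin K (Set.range v))) s := by
    intro s hs
    have := hc s hs
    rw [cons_indep_iff_option, hv.option_iff_transcendental] at this
    rwa [Transcendental, not_not] at this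
  have hf : Transcendental (↥(Algebra.adjoin K (Set.range v))) f := by
    rw [← hv.option_iff_transcendental, ← cons_indep_iff_option]
    exact h
  exact hf (closure_lemma hv S hS hall f)
end

section
variable {K : Type*} [Field K] {N : ℕ}

theorem chain_indep : ∀ (d : ℕ) (p : Fin (d+1) → Ideal (MvPolynomial (Fin N) K)),
    StrictMono p → (∀ i, (p i).IsPrime) →
    ∃ c : Fin d → Fin N,
      AlgebraicIndependent K (fun j => Ideal.Quotient.mk (p 0) (X (c j))) := by
  intro d
  induction d with
  | zero =>
    intro p hmono hprime
    refine ⟨Fin.elim0, ?_⟩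
    haveI := hprime 0
    rw [show (fun j : Fin 0 => Ideal.Quotient.mk (p 0) (X (Fin.elim0 j))) = Fin.elim0 from
      funext fun j => j.elim0]
    haveI : Nontrivial (MvPolynomial (Fin N) K ⧸ p 0) :=
      Ideal.Quotient.nontrivial_iff.mpr (hprime 0).ne_top
    rw [show (Fin.elim0 : Fin 0 → MvPolynomial (Fin N) K ⧸ p 0) = fun x : Fin 0 => x.elim0 from
      funext fun j => j.elim0]
    exact algebraicIndependent_empty_type_iff.mpr (algebraMap K _).injective
  | succ d ih =>
    intro p hmono hprime
    obtain ⟨c, hc⟩ := ih (p ∘ Fin.succ) (hmono.comp Fin.strictMono_succ)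
      (fun i => hprime i.succ)
    -- b ∈ p 1 \ p 0
    have hlt : p 0 < p (Fin.succ 0) := hmono (by simp [Fin.lt_def])
    obtain ⟨b, hbJ, hbI⟩ := SetLike.exists_of_lt hlt
    haveI := hprime 0
    have hcons := cons_indep (K := K) (p 0) (p (Fin.succ 0)) (hprime 0) (le_of_lt hlt)
      hbJ hbI (v := fun j => X (c j)) hc
    -- replace b by a variable, using that the variables generate
    haveI : IsDomain (MvPolynomial (Fin N) K ⧸ p 0) := (Ideal.Quotient.isDomain_iff_prime _).mpr
      (hprime 0)
    set S : Set (MvPolynomial (Fin N) K ⧸ p 0) :=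
      Set.range (fun i : Fin N => Ideal.Quotient.mk (p 0) (X i)) with hSdef
    have hS : Algebra.adjoin K S = ⊤ := by
      have h1 : S = ⇑(Ideal.Quotient.mkₐ K (p 0)) '' Set.range (X : Fin N → _) := by
        rw [← Set.range_comp]; rfl
      rw [h1, ← AlgHom.map_adjoin, MvPolynomial.adjoin_range_X, Algebra.map_top]
      rw [AlgHom.range_eq_top]
      exact Ideal.Quotient.mkₐ_surjective K (p 0)
    have hfam : (fun i => Ideal.Quotient.mk (p 0) ((Fin.cons b (fun j => X (c j)) :
        Fin (d+1) → MvPolynomial (Fin N) K) i))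
        = (Fin.cons (Ideal.Quotient.mk (p 0) b)
            (fun j => Ideal.Quotient.mk (p 0) (X (c j))) : Fin (d+1) → _) := by
      funext i
      refine Fin.cases ?_ ?_ i <;> simp
    rw [hfam] at hcons
    obtain ⟨s, hsS, hs⟩ := exists_gen_cons hcons S hS
    obtain ⟨i0, rfl⟩ := hsS
    refine ⟨Fin.cons i0 c, ?_⟩
    have : (fun j => Ideal.Quotient.mk (p 0) (X ((Fin.cons i0 c : Fin (d+1) → Fin N) j)))
        = (Fin.cons (Ideal.Quotient.mk (p 0) (X i0))
            (fun j => Ideal.Quotient.mk (p 0) (X (c j))) : Fin (d+1) → _) := by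
      funext j
      refine Fin.cases ?_ ?_ j <;> simp
    rw [this]
    exact hs
end


theorem degree_eq_sum {α : Type*} (f : α →₀ ℕ) : f.degree = f.sum fun _ => id := by
  rw [Finsupp.degree, Finsupp.sum]; rfl

theorem homog_fg (N t : ℕ) :
    (homogeneousSubmodule (Fin N) ℂ t).FG := by
  classical
  have hspan : homogeneousSubmodule (Fin N) ℂ t =
      Submodule.span ℂ (Set.range (fun d : {P : Fin N →₀ ℕ // (P.sum fun _ => id) = t} =>
        (monomial d.1 (1:ℂ)))) := by
    apply le_antisymm
    · intro φ hφ
      rw [φ.as_sum]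
      refine Submodule.sum_mem _ fun d hd => ?_
      have hd0 : coeff d φ ≠ 0 := mem_support_iff.mp hd
      have hdeg : (d.sum fun _ => id) = t := by
        have h := (mem_homogeneousSubmodule _ _).mp hφ hd0
        change (Finsupp.weight (fun _ => 1)) d = t at h
        rw [← Finsupp.degree_eq_weight_one] at h
        rw [← degree_eq_sum, h]
      have h2 : monomial d (coeff d φ) = (coeff d φ) • monomial d (1:ℂ) := by
        rw [smul_monomial, smul_eq_mul, mul_one]
      rw [h2]
      exact Submodule.smul_mem _ _ (Submodule.subset_span ⟨⟨d, hdeg⟩, rfl⟩)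
    · rw [Submodule.span_le]
      rintro _ ⟨d, rfl⟩
      rw [SetLike.mem_coe, mem_homogeneousSubmodule]
      refine isHomogeneous_monomial _ ?_
      rw [degree_eq_sum]
      exact d.2
  rw [hspan]
  haveI : Fintype {P : Fin N →₀ ℕ // (P.sum fun _ => id) = t} :=
    Fintype.ofEquiv _ (Sym.equivNatSum (Fin N) t)
  exact Submodule.fg_span (Set.finite_range _)

theorem card_deg_t (m t : ℕ) :
    Nat.card {P : Fin (m+1) →₀ ℕ // (P.sum fun _ => id) = t} = (t + m).choose m := by
  classical
  rw [Nat.card_congr (Sym.equivNatSum (Fin (m+1)) t).symm, Nat.card_eq_fintype_card,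
    Sym.card_sym_eq_choose, Fintype.card_fin]
  have h2 : m + 1 + t - 1 = t + m := by omega
  rw [h2]
  have h3 : (t + m).choose ((t+m) - m) = (t+m).choose m := Nat.choose_symm (by omega)
  have h4 : (t+m) - m = t := by omega
  rw [h4] at h3
  exact h3

end Auxiliary

theorem statement0 (n k t : ℕ) (ht : 1 ≤ t)
    (P : Ideal (MvPolynomial (Fin (n + 1)) ℂ))
    (hprime : P.IsPrime)
    (hhom : ∀ f ∈ P, ∀ i : ℕ, MvPolynomial.homogeneousComponent i f ∈ P)
    (hdim : ringKrullDim (MvPolynomial (Fin (n + 1)) ℂ ⧸ P) = ((k + 1 : ℕ) : WithBot ℕ∞)) :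
    (t + k).choose k ≤
      Module.finrank ℂ
        ((MvPolynomial.homogeneousSubmodule (Fin (n + 1)) ℂ t).map
          (Ideal.Quotient.mkₐ ℂ P).toLinearMap) := by
  classical
  haveI := hprime
  set R := MvPolynomial (Fin (n + 1)) ℂ with hR
  -- Step 1 : extract a chain of primes of length k+1
  have hex : ∃ q : LTSeries (PrimeSpectrum (R ⧸ P)),
      k + 1 ≤ q.length := by
    by_contra hcon
    push_neg at hcon
    have hle : Order.krullDim (PrimeSpectrum (R ⧸ P)) ≤ ((k : ℕ) : WithBot ℕ∞) := by
      rw [Order.krullDim]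
      refine iSup_le fun q => ?_
      have : q.length ≤ k := by have := hcon q; omega
      exact_mod_cast this
    have h2 : ((k + 1 : ℕ) : WithBot ℕ∞) ≤ ((k : ℕ) : WithBot ℕ∞) := by
      rw [← hdim]; exact hle
    have : (k + 1 : ℕ) ≤ k := by exact_mod_cast h2
    omega
  obtain ⟨q, hq⟩ := hex
  -- Step 2 : the chain of ideals in R
  set p : Fin (k + 2) → Ideal R := fun i =>
    (q.toFun ⟨i, by omega⟩).asIdeal.comap (Ideal.Quotient.mk P) with hp
  have hpmono : StrictMono p := by
    intro i j hij
    have h1 : q.toFun ⟨i, by omega⟩ < q.toFun ⟨j, by omega⟩ := by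
      apply q.rel_of_lt
      simp only [Fin.mk_lt_mk]
      exact hij
    have h2 := (PrimeSpectrum.asIdeal_lt_asIdeal _ _).mpr h1
    have hmk : Function.Surjective (Ideal.Quotient.mk P) := Ideal.Quotient.mk_surjective
    refine lt_of_le_of_ne (Ideal.comap_mono h2.le) ?_
    intro heq
    exact h2.ne (Ideal.comap_injective_of_surjective _ hmk heq)
  have hpprime : ∀ i, (p i).IsPrime := fun i => Ideal.IsPrime.comap _
  have hP0 : P ≤ p 0 := fun x hx => by
    refine Ideal.mem_comap.mpr ?_
    rw [Ideal.Quotient.eq_zero_iff_mem.mpr hx]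
    exact zero_mem _
  -- Step 3 : independent variables mod p 0, then mod P
  obtain ⟨c, hc⟩ := chain_indep (k + 1) p hpmono hpprime
  have h0 : ∀ a ∈ P, (Ideal.Quotient.mkₐ ℂ (p 0)) a = 0 := fun a ha => by
    rw [Ideal.Quotient.mkₐ_eq_mk, Ideal.Quotient.eq_zero_iff_mem]
    exact hP0 ha
  have hind : AlgebraicIndependent ℂ (fun j => Ideal.Quotient.mk P (X (c j))) := by
    refine AlgebraicIndependent.of_comp (Ideal.Quotient.liftₐ P (Ideal.Quotient.mkₐ ℂ (p 0)) h0) ?_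
    have heq : (⇑(Ideal.Quotient.liftₐ P (Ideal.Quotient.mkₐ ℂ (p 0)) h0) ∘
        fun j => Ideal.Quotient.mk P (X (c j)))
        = fun j => Ideal.Quotient.mk (p 0) (X (c j)) := by
      funext j
      simp [Ideal.Quotient.liftₐ_apply, Ideal.Quotient.lift_mk, Ideal.Quotient.mkₐ_eq_mk]; rfl
    rw [heq]
    exact hc
  -- Step 4 : the evaluation map and the monomial family
  set ψ : MvPolynomial (Fin (k+1)) ℂ →ₐ[ℂ] R ⧸ P :=
    MvPolynomial.aeval (fun j : Fin (k+1) => Ideal.Quotient.mk P (X (c j))) with hψ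
  have hψinj : Function.Injective ψ := algebraicIndependent_iff_injective_aeval.1 hind
  have hψeq : ∀ g, ψ g = Ideal.Quotient.mkₐ ℂ P (rename c g) := by
    have h2 : ψ = (Ideal.Quotient.mkₐ ℂ P).comp (rename c : _ →ₐ[ℂ] R) := by
      apply MvPolynomial.algHom_ext
      intro j
      simp [ψ]
    intro g; rw [h2]; rfl
  set T := (MvPolynomial.homogeneousSubmodule (Fin (n + 1)) ℂ t).map
      (Ideal.Quotient.mkₐ ℂ P).toLinearMap with hT
  set ι := {P : Fin (k+1) →₀ ℕ // (P.sum fun _ => id) = t} with hι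
  haveI : Fintype ι := Fintype.ofEquiv _ (Sym.equivNatSum (Fin (k+1)) t)
  have memT : ∀ d : ι, ψ (monomial d.1 1) ∈ T := by
    intro d
    rw [hψeq]
    refine ⟨rename c (monomial d.1 1), ?_, rfl⟩
    rw [SetLike.mem_coe, mem_homogeneousSubmodule, rename_monomial]
    refine isHomogeneous_monomial _ ?_
    rw [degree_eq_sum, Finsupp.sum_mapDomain_index (fun _ => rfl) (fun _ _ _ => rfl)]
    exact d.2
  set F : ι → ↥T := fun d => ⟨ψ (monomial d.1 1), memT d⟩ with hF
  have hlin : LinearIndependent ℂ F := by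
    have h1 : LinearIndependent ℂ (fun d : ι => (monomial d.1 (1:ℂ) : MvPolynomial (Fin (k+1)) ℂ)) := by
      have := (MvPolynomial.basisMonomials (Fin (k+1)) ℂ).linearIndependent
      have h2 := this.comp (fun d : ι => d.1) Subtype.val_injective
      rwa [show ((⇑(basisMonomials (Fin (k+1)) ℂ)) ∘ fun d : ι => d.1)
        = fun d : ι => (monomial d.1 (1:ℂ)) from by
          funext d; rw [Function.comp, coe_basisMonomials]] at h2
    have h2 : LinearIndependent ℂ (fun d : ι => ψ (monomial d.1 1)) := by
      have h3 := h1.map' ψ.toLinearMap (LinearMap.ker_eq_bot.mpr hψinj)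
      rwa [show (⇑ψ.toLinearMap ∘ fun d : ι => (monomial d.1 (1:ℂ)))
        = fun d : ι => ψ (monomial d.1 1) from rfl] at h3
    exact LinearIndependent.of_comp T.subtype h2
  -- Step 5 : conclude
  haveI : Module.Finite ℂ ↥T := Module.Finite.iff_fg.mpr ((homog_fg (n+1) t).map _)
  have hcard := hlin.fintype_card_le_finrank
  rw [show Fintype.card ι = (t + k).choose k from by
    rw [← Nat.card_eq_fintype_card]; exact card_deg_t k t] at hcard
  exact hcard

end
end

section
/- Let C be an irreducible projective curve in P^n whose linear span has dimension s. Then for every t ≥ 1, the codimension of the space of degree-t forms vanishing on C inside H^0(P^n, O(t)) is at least s·t + 1; equivalently, the image of the restriction map H^0(P^n, O(t)) → H^0(C, O_C(t)) has dimension at least s·t + 1. -/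
/-!
STATEMENT 1: Let `C ⊆ ℙⁿ(ℂ)` be an irreducible projective curve whose linear
span has dimension `s`.  For every `t ≥ 1` the image of the restriction map
`H⁰(ℙⁿ, O(t)) → H⁰(C, O_C(t))` has dimension at least `s·t + 1`, equivalently
the space of degree-`t` forms vanishing on `C` has codimension at least
`s·t + 1` in `H⁰(ℙⁿ, O(t))`.

Encoding: `C` is given by its homogeneous prime ideal `P` (irreducibility =
primality, homogeneity as stated) with affine cone of Krull dimension 2
(`C` is a curve).  The linear span of `C` has dimension `s` iff the space of
linear forms vanishing on `C`, i.e. `P` intersected with the degree-1 forms,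
has dimension `n − s`.  The image of the restriction map is the image of the
degree-`t` forms in `ℂ[x]/P`.
-/

noncomputable section

section HopfLemma
open Module Submodule Polynomial

variable {k F : Type*} [Field k] [IsAlgClosed k] [Field F] [Algebra k F]

/-- multiplication by a nonzero element as a `k`-linear equiv of `F`. -/
def mulLEquiv (x : F) (hx : x ≠ 0) : F ≃ₗ[k] F :=
  LinearEquiv.ofLinear (LinearMap.mulLeft k x) (LinearMap.mulLeft k x⁻¹)
    (by ext a; simp [LinearMap.mulLeft_apply, ← mul_assoc, mul_inv_cancel₀ hx])
    (by ext a; simp [LinearMap.mulLeft_apply, ← mul_assoc, inv_mul_cancel₀ hx])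

omit [IsAlgClosed k] in
lemma span_mul_eq_map (x : F) (B : Submodule k F) :
    span k {x} * B = B.map (LinearMap.mulLeft k x) := by
  apply le_antisymm
  · rw [Submodule.mul_le]
    intro m hm b hb
    rw [Submodule.mem_span_singleton] at hm
    obtain ⟨c, rfl⟩ := hm
    exact ⟨c • b, B.smul_mem c hb, by simp [LinearMap.mulLeft_apply, mul_smul_comm]⟩
  · rintro _ ⟨b, hb, rfl⟩
    exact Submodule.mul_mem_mul (Submodule.mem_span_singleton_self x) hb

omit [IsAlgClosed k] in
lemma finrank_span_mul (x : F) (hx : x ≠ 0) (B : Submodule k F) :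
    finrank k ↥(span k {x} * B) = finrank k B := by
  rw [span_mul_eq_map]
  exact (LinearEquiv.finrank_map_eq (mulLEquiv (k := k) x hx) B)

omit [IsAlgClosed k] in
lemma fd_span_mul (x : F) (hx : x ≠ 0) (B : Submodule k F) [FiniteDimensional k B] :
    FiniteDimensional k ↥(span k {x} * B) := by
  rw [span_mul_eq_map]
  show FiniteDimensional k ↥(B.map ((mulLEquiv (k := k) x hx) : F →ₗ[k] F))
  exact LinearEquiv.finiteDimensional (Submodule.equivMapOfInjective _
    (mulLEquiv (k := k) x hx).injective B)

/-- An element stabilizing a nonzero finite-dimensional subspace of a field extension of an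
algebraically closed field is a scalar. -/
lemma stab_mem (y : F) (B : Submodule k F) [FiniteDimensional k B] (hB : B ≠ ⊥)
    (h : ∀ b ∈ B, y * b ∈ B) : ∃ c : k, y = algebraMap k F c := by
  obtain ⟨b0, hb0B, hb0⟩ := B.ne_bot_iff.mp hB
  have hpow : ∀ i : ℕ, y ^ i * b0 ∈ B := by
    intro i
    induction i with
    | zero => simpa using hb0B
    | succ i ih => have := h _ ih; rwa [← mul_assoc, ← pow_succ'] at this
  set N := finrank k B with hN
  have hdep : ¬ LinearIndependent k (fun i : Fin (N + 1) => y ^ (i : ℕ) * b0) := by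
    intro hli
    have hli' : LinearIndependent k (fun i : Fin (N + 1) =>
        (⟨y ^ (i : ℕ) * b0, hpow i⟩ : B)) := by
      apply LinearIndependent.of_comp B.subtype
      exact hli
    have := hli'.fintype_card_le_finrank
    simp [hN] at this
  rw [Fintype.not_linearIndependent_iff] at hdep
  obtain ⟨g, hsum, i0, hg0⟩ := hdep
  have hsum' : (∑ i : Fin (N + 1), g i • y ^ (i : ℕ)) * b0 = 0 := by
    rw [Finset.sum_mul]
    simpa [smul_mul_assoc] using hsum
  have hy0 : ∑ i : Fin (N + 1), g i • y ^ (i : ℕ) = 0 :=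
    by rcases mul_eq_zero.mp hsum' with h' | h'; exact h'; exact absurd h' hb0
  set p : Polynomial k := ∑ i : Fin (N + 1), Polynomial.C (g i) * Polynomial.X ^ (i : ℕ) with hp
  have hpne : p ≠ 0 := by
    intro hzero
    have : p.coeff (i0 : ℕ) = g i0 := by
      rw [hp, Polynomial.finset_sum_coeff]
      simp only [Polynomial.coeff_C_mul, Polynomial.coeff_X_pow]
      rw [Finset.sum_eq_single i0]
      · simp
      · intro j _ hj
        have : ¬ ((j : ℕ) = (i0 : ℕ)) := fun hc => hj (Fin.val_injective hc)
        simp [Ne.symm this]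
      · simp
    rw [hzero] at this
    simp at this
    exact hg0 this.symm
  have haev : Polynomial.aeval y p = 0 := by
    rw [hp]
    simp only [map_sum, map_mul, map_pow, Polynomial.aeval_C, Polynomial.aeval_X]
    simpa [Algebra.smul_def] using hy0
  have halg : IsAlgebraic k y := ⟨p, hpne, haev⟩
  have hint : IsIntegral k y := halg.isIntegral
  have hirr := minpoly.irreducible hint
  have hdeg : (minpoly k y).degree = 1 := IsAlgClosed.degree_eq_one_of_irreducible k hirr
  have hnd : (minpoly k y).natDegree = 1 := Polynomial.natDegree_eq_of_degree_eq_some hdeg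
  have hXC := (minpoly.monic hint).eq_X_add_C hnd
  refine ⟨-(minpoly k y).coeff 0, ?_⟩
  have := minpoly.aeval k y
  rw [hXC] at this
  simp only [map_add, Polynomial.aeval_X, Polynomial.aeval_C] at this
  rw [map_neg]
  linear_combination this

lemma hopf_aux : ∀ m : ℕ, ∀ A B : Submodule k F, FiniteDimensional k A →
    FiniteDimensional k B → A ≠ ⊥ → B ≠ ⊥ → finrank k A ≤ m →
    finrank k A + finrank k B ≤ finrank k ↥(A * B) + 1 := by
  intro m
  induction m with
  | zero =>
    intro A B fdA fdB hA hB hm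
    exact absurd (Submodule.finrank_eq_zero.mp (Nat.le_zero.mp hm)) hA
  | succ m ih =>
    intro A B fdA fdB hA hB hm
    by_cases hm1 : finrank k A ≤ 1
    · -- A is a line
      obtain ⟨a, haA, ha0⟩ := A.ne_bot_iff.mp hA
      have h1 : finrank k A = 1 := by
        have : finrank k A ≠ 0 := fun hc => hA (Submodule.finrank_eq_zero.mp hc)
        omega
      have hsp : span k {a} = A := by
        apply Submodule.eq_of_le_of_finrank_le ((Submodule.span_singleton_le_iff_mem a A).mpr haA)
        rw [h1, finrank_span_singleton ha0]
      have : A * B = span k {a} * B := by rw [hsp]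
      rw [this, finrank_span_mul a ha0 B, h1]
      omega
    · push_neg at hm1
      by_cases hx : ∃ x : F, x ≠ 0 ∧ A ⊓ (span k {x} * B) ≠ ⊥ ∧ A ⊓ (span k {x} * B) ≠ A
      · obtain ⟨x, hx0, hS0, hSA⟩ := hx
        set xB := span k {x} * B with hxB
        haveI fdxB : FiniteDimensional k ↥xB := fd_span_mul x hx0 B
        set S := A ⊓ xB with hSdef
        set T := B ⊔ (span k {x⁻¹} * A) with hTdef
        haveI fdS : FiniteDimensional k ↥S := Submodule.finiteDimensional_of_le inf_le_left
        haveI fdxiA : FiniteDimensional k ↥(span k {x⁻¹} * A) :=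
          fd_span_mul x⁻¹ (inv_ne_zero hx0) A
        haveI fdT : FiniteDimensional k ↥T := Submodule.finiteDimensional_sup _ _
        -- finrank T = finrank (xB ⊔ A)
        have hxT : span k {x} * T = xB ⊔ A := by
          rw [hTdef, Submodule.mul_sup, ← hxB, ← mul_assoc,
            Submodule.span_mul_span, Set.singleton_mul_singleton,
            mul_inv_cancel₀ hx0, ← Submodule.one_eq_span, one_mul]
        have hfrT : finrank k ↥T = finrank k ↥(xB ⊔ A) := by
          rw [← hxT, finrank_span_mul x hx0 T]
        -- rank sum identity
        have hsum : finrank k ↥S + finrank k ↥T = finrank k A + finrank k B := by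
          rw [hfrT, hSdef]
          have := Submodule.finrank_sup_add_finrank_inf_eq A xB
          rw [sup_comm] at this
          rw [add_comm, this, finrank_span_mul x hx0 B]
        -- S * T ≤ A * B
        have hST : S * T ≤ A * B := by
          rw [hTdef, Submodule.mul_sup]
          apply sup_le
          · exact mul_le_mul' inf_le_left le_rfl
          · calc S * (span k {x⁻¹} * A) ≤ xB * (span k {x⁻¹} * A) :=
                  mul_le_mul' inf_le_right le_rfl
              _ = (span k {x} * span k {x⁻¹}) * (B * A) := by
                  rw [hxB]; exact mul_mul_mul_comm _ _ _ _
              _ = A * B := by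
                  rw [Submodule.span_mul_span, Set.singleton_mul_singleton,
                    mul_inv_cancel₀ hx0, ← Submodule.one_eq_span, one_mul, mul_comm]
        haveI fdAB : FiniteDimensional k ↥(A * B) := by
          rw [← Submodule.fg_iff_finiteDimensional]
          exact Submodule.FG.mul (Submodule.fg_iff_finiteDimensional _ |>.mpr fdA)
            (Submodule.fg_iff_finiteDimensional _ |>.mpr fdB)
        haveI fdST : FiniteDimensional k ↥(S * T) := Submodule.finiteDimensional_of_le hST
        have hSlt : finrank k ↥S < finrank k A :=
          Submodule.finrank_lt_finrank_of_lt (lt_of_le_of_ne inf_le_left hSA)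
        have hTne : T ≠ ⊥ := fun hc => hB (by
          apply eq_bot_iff.mpr; rw [← hc]; exact le_sup_left)
        have := ih S T fdS fdT hS0 hTne (by omega)
        have hmono : finrank k ↥(S * T) ≤ finrank k ↥(A * B) := Submodule.finrank_mono hST
        omega
      · -- no such x : then A is a line, contradiction with 1 < finrank A
        exfalso
        obtain ⟨a, haA, ha0⟩ := A.ne_bot_iff.mp hA
        have key : ∀ a' ∈ A, ∀ b ∈ B, (a⁻¹ * a') * b ∈ B := by
          intro a' ha' b hb
          rcases eq_or_ne b 0 with rfl | hb0
          · simpa using B.zero_mem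
          · set x := a * b⁻¹ with hxdef
            have hx0 : x ≠ 0 := mul_ne_zero ha0 (inv_ne_zero hb0)
            have hmemA : a ∈ A ⊓ (span k {x} * B) := by
              refine ⟨haA, ?_⟩
              have := Submodule.mul_mem_mul (Submodule.mem_span_singleton_self x) hb
              rwa [hxdef, mul_assoc, inv_mul_cancel₀ hb0, mul_one] at this
            have hne : A ⊓ (span k {x} * B) ≠ ⊥ := fun hc => ha0 (by
              rw [hc] at hmemA; simpa using hmemA)
            have heq : A ⊓ (span k {x} * B) = A := by
              by_contra hne'
              exact hx ⟨x, hx0, hne, hne'⟩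
            have hsub : A ≤ span k {x} * B := by
              rw [← heq]; exact inf_le_right
            obtain ⟨z, hzB, hz⟩ := Submodule.mem_span_singleton_mul.mp (hsub ha')
            have : (a⁻¹ * a') * b = z := by
              rw [← hz, hxdef]
              field_simp
            rwa [this]
        have hline : A ≤ span k {a} := by
          intro a' ha'
          obtain ⟨c, hc⟩ := stab_mem (a⁻¹ * a') B hB (key a' ha')
          rw [Submodule.mem_span_singleton]
          refine ⟨c, ?_⟩
          have : a' = a * (a⁻¹ * a') := by field_simp
          rw [this, hc, Algebra.smul_def, mul_comm]
        have : finrank k A ≤ 1 := by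
          have := Submodule.finrank_mono (M := F) hline
          rwa [finrank_span_singleton ha0] at this
        omega

/-- Hopf-type lemma: in a field extension of an algebraically closed field,
`dim ⟨A·B⟩ ≥ dim A + dim B - 1`. -/
lemma hopf (A B : Submodule k F) [FiniteDimensional k A] [FiniteDimensional k B]
    (hA : A ≠ ⊥) (hB : B ≠ ⊥) :
    finrank k A + finrank k B ≤ finrank k ↥(A * B) + 1 :=
  hopf_aux (finrank k A) A B ‹_› ‹_› hA hB le_rfl

end HopfLemma

open MvPolynomial Module Submodule


set_option maxHeartbeats 1000000 in
set_option synthInstance.maxHeartbeats 1000000 in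
theorem statement1 (n s t : ℕ) (ht : 1 ≤ t) (hs : s ≤ n)
    (P : Ideal (MvPolynomial (Fin (n + 1)) ℂ))
    (hprime : P.IsPrime)
    (hhom : ∀ f ∈ P, ∀ i : ℕ, MvPolynomial.homogeneousComponent i f ∈ P)
    (hcurve : ringKrullDim (MvPolynomial (Fin (n + 1)) ℂ ⧸ P) = ((2 : ℕ) : WithBot ℕ∞))
    (hspan : Module.finrank ℂ
        ↥((MvPolynomial.homogeneousSubmodule (Fin (n + 1)) ℂ 1) ⊓
          (Submodule.restrictScalars ℂ P)) = n - s) :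
    s * t + 1 ≤
      Module.finrank ℂ
        ((MvPolynomial.homogeneousSubmodule (Fin (n + 1)) ℂ t).map
          (Ideal.Quotient.mkₐ ℂ P).toLinearMap) := by
  classical
  haveI := hprime
  -- notation
  let S := MvPolynomial (Fin (n + 1)) ℂ ⧸ P
  haveI : IsDomain S := Ideal.Quotient.isDomain P
  let F := FractionRing S
  let ι : S →ₐ[ℂ] F := IsScalarTower.toAlgHom ℂ S F
  have hι : Function.Injective ι.toLinearMap := by
    have : Function.Injective (algebraMap S F) := IsFractionRing.injective S F
    simpa [ι] using this
  let ψ : MvPolynomial (Fin (n + 1)) ℂ →ₐ[ℂ] F := ι.comp (Ideal.Quotient.mkₐ ℂ P)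
  -- finite dimensionality of homogeneous components
  have fdhom : ∀ d : ℕ, FiniteDimensional ℂ (homogeneousSubmodule (Fin (n+1)) ℂ d) := by
    intro d
    have hle : homogeneousSubmodule (Fin (n+1)) ℂ d ≤ restrictTotalDegree (Fin (n+1)) ℂ d := by
      intro f hf
      rw [mem_restrictTotalDegree]
      exact MvPolynomial.IsHomogeneous.totalDegree_le hf
    exact Submodule.finiteDimensional_of_le hle
  -- the degree-`d` part of the image in `F`
  let E : ℕ → Submodule ℂ F := fun d =>
    (homogeneousSubmodule (Fin (n+1)) ℂ d).map ψ.toLinearMap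
  have hEeq : ∀ d : ℕ, finrank ℂ (E d) = finrank ℂ
      ((homogeneousSubmodule (Fin (n+1)) ℂ d).map (Ideal.Quotient.mkₐ ℂ P).toLinearMap) := by
    intro d
    have h1 : E d = ((homogeneousSubmodule (Fin (n+1)) ℂ d).map
        (Ideal.Quotient.mkₐ ℂ P).toLinearMap).map ι.toLinearMap := by
      rw [← Submodule.map_comp]
      rfl
    rw [h1]
    exact (LinearEquiv.finrank_eq (Submodule.equivMapOfInjective ι.toLinearMap hι _)).symm
  have fdE : ∀ d : ℕ, FiniteDimensional ℂ (E d) := by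
    intro d
    haveI := fdhom d
    rw [← Submodule.fg_iff_finiteDimensional]
    exact Submodule.FG.map _ ((Submodule.fg_iff_finiteDimensional _).mpr (fdhom d))
  -- base case : finrank (E 1) ≥ s + 1
  have hbase : s + 1 ≤ finrank ℂ (E 1) := by
    haveI := fdhom 1
    set V1 := homogeneousSubmodule (Fin (n+1)) ℂ 1 with hV1
    set q := (Ideal.Quotient.mkₐ ℂ P).toLinearMap with hq
    have hrn := LinearMap.finrank_range_add_finrank_ker (q.domRestrict V1)
    rw [LinearMap.range_domRestrict] at hrn
    -- kernel identification
    have hker : LinearMap.ker q = Submodule.restrictScalars ℂ P := by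
      ext x
      simp [hq, LinearMap.mem_ker, Ideal.Quotient.mkₐ_eq_mk, Ideal.Quotient.eq_zero_iff_mem]
    have hker2 : finrank ℂ (LinearMap.ker (q.domRestrict V1)) = n - s := by
      rw [LinearMap.ker_domRestrict, hker]
      have e := Submodule.equivMapOfInjective V1.subtype (Submodule.injective_subtype V1)
        (Submodule.comap V1.subtype (Submodule.restrictScalars ℂ P))
      rw [Submodule.map_comap_subtype] at e
      rw [LinearEquiv.finrank_eq e, hspan]
    -- finrank V1 ≥ n + 1
    have hV1rank : n + 1 ≤ finrank ℂ V1 := by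
      have hX : LinearIndependent ℂ (fun i : Fin (n+1) => (X i : MvPolynomial (Fin (n+1)) ℂ)) := by
        have h := (MvPolynomial.basisMonomials (Fin (n+1)) ℂ).linearIndependent
        have h2 := h.comp (fun i : Fin (n+1) => Finsupp.single i 1)
          (Finsupp.single_left_injective one_ne_zero)
        exact MvPolynomial.linearIndependent_X (R := ℂ) (σ := Fin (n+1))
      let v : Fin (n+1) → V1 := fun i => ⟨X i, (mem_homogeneousSubmodule _ _).mpr
        (isHomogeneous_X ℂ i)⟩
      have hv : LinearIndependent ℂ v := by
        apply LinearIndependent.of_comp V1.subtype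
        exact hX
      simpa using hv.fintype_card_le_finrank
    have : s + 1 ≤ finrank ℂ (V1.map q) := by omega
    rw [hEeq 1]
    exact this
  -- inductive step via the Hopf bound
  have hne : ∀ d : ℕ, 1 ≤ finrank ℂ (E d) → E d ≠ ⊥ := by
    intro d h hbot
    rw [hbot] at h
    simp [finrank_bot] at h
  have claim : ∀ u : ℕ, 1 ≤ u → s * u + 1 ≤ finrank ℂ (E u) := by
    intro u hu
    induction u, hu using Nat.le_induction with
    | base => simpa using hbase
    | succ u hu ih =>
      haveI := fdE 1; haveI := fdE u; haveI := fdE (u+1)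
      have hmul : E 1 * E u ≤ E (u + 1) := by
        have h1 : homogeneousSubmodule (Fin (n+1)) ℂ 1 * homogeneousSubmodule (Fin (n+1)) ℂ u ≤
            homogeneousSubmodule (Fin (n+1)) ℂ (1 + u) := homogeneousSubmodule_mul 1 u
        have h2 := Submodule.map_mono (f := ψ.toLinearMap) h1
        rw [Submodule.map_mul] at h2
        simpa [E, Nat.add_comm] using h2
      haveI : FiniteDimensional ℂ ↥(E 1 * E u) := Submodule.finiteDimensional_of_le hmul
      have hopf' := hopf (E 1) (E u) (hne 1 (by omega)) (hne u (by omega))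
      have hmono : finrank ℂ ↥(E 1 * E u) ≤ finrank ℂ (E (u+1)) := Submodule.finrank_mono hmul
      have harith : s * (u + 1) = s * u + s := by ring
      omega
  rw [← hEeq t]
  exact claim t ht

end
end

section
/- Let C ⊂ P^n be a smooth conic through p spanning a 2-plane P, Γ a hyperplane not through p given by x_0 = 0, l_C = Γ ∩ P, q_C = Γ ∩ T_pC. If f is a homogeneous form of degree i on Γ such that f restricted to l_C has a zero of order j at q_C, then the section x_0^{d−i} f of O_{P^n}(d) restricts to a section of O_C(d) with a zero of order exactly i + j at p. -/
noncomputable section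
open MvPolynomial

/-- Parameter for a parametrized conic in `ℙⁿ(ℂ)`: the matrix entries of a
linear map `ℂ³ → ℂ^{n+1}`; the conic is the image of the standard (Veronese)
conic `(s:t) ↦ (s², st, t²)` in `ℙ²` under this map.  Every smooth conic arises
this way from an injective such map, and the marked point is the image of
`(1:0)`. -/
abbrev CParam (n : ℕ) := (Fin (n + 1) × Fin 3) → ℂ

/-- The linear map `ℂ³ → ℂ^{n+1}` attached to a conic parameter. -/
def cmap (n : ℕ) (v : CParam n) : (Fin 3 → ℂ) →ₗ[ℂ] (Fin (n + 1) → ℂ) :=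
  (Matrix.of fun i j => v (i, j)).mulVecLin

/-- The standard parametrization of the conic. -/
def ver (s t : ℂ) : Fin 3 → ℂ := ![s ^ 2, s * t, t ^ 2]

/-- `v` parametrizes a smooth conic iff the linear map is injective (the
plane of the conic is then the image of `ℂ³`). -/
def IsSmoothConicParam (n : ℕ) (v : CParam n) : Prop := Function.Injective (cmap n v)

/-- The set of points of `ℙⁿ(ℂ)` on the conic. -/
def conicPts (n : ℕ) (v : CParam n) : Set (Projectivization ℂ (Fin (n + 1) → ℂ)) :=
  {x | ∃ s t : ℂ, ∃ hw : cmap n v (ver s t) ≠ 0, x = Projectivization.mk ℂ _ hw}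

/-- The `j`-th column, i.e. the image of the `j`-th basis vector of `ℂ³`. -/
def ccol (n : ℕ) (j : Fin 3) (v : CParam n) : Fin (n + 1) → ℂ := fun i => v (i, j)

/-- The conic passes through the point `[vp]` at the marked parameter `(1:0)`. -/
def MarkedAt (n : ℕ) (vp : Fin (n + 1) → ℂ) (v : CParam n) : Prop :=
  ∃ c : ℂ, c ≠ 0 ∧ ccol n 0 v = c • vp

/-- The (affine cone over the) tangent line to the conic at the marked point. -/
def tangentSpan (n : ℕ) (v : CParam n) : Submodule ℂ (Fin (n + 1) → ℂ) :=
  Submodule.span ℂ {ccol n 0 v, ccol n 1 v}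

/-- The (affine cone over the) 2-plane spanned by the conic. -/
def planeSpan (n : ℕ) (v : CParam n) : Submodule ℂ (Fin (n + 1) → ℂ) :=
  LinearMap.range (cmap n v)

/-- A Zariski-closed subset of the affine space `ℂ^κ`. -/
def IsZarClosed {κ : Type} (S : Set (κ → ℂ)) : Prop :=
  ∃ I : Ideal (MvPolynomial κ ℂ), S = MvPolynomial.zeroLocus ℂ I

/-- A cone in `ℂ^κ` (so that it corresponds to a closed subvariety of the
projective space of `ℂ^κ`; closed cones give *complete* families). -/
def IsCone {κ : Type} (S : Set (κ → ℂ)) : Prop := ∀ (c : ℂ), ∀ x ∈ S, c • x ∈ S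

/-- The Krull dimension of (the Zariski closure of) a subset of `ℂ^κ`. -/
def zarDim {κ : Type} (S : Set (κ → ℂ)) : WithBot ℕ∞ :=
  ringKrullDim (MvPolynomial κ ℂ ⧸ MvPolynomial.vanishingIdeal ℂ S)


/-- Representative of `q_C = Γ ∩ T_pC` (for `Γ = {x₀ = 0}`): the point of the
tangent line `Span(A e₀, A e₁)` with vanishing `x₀`-coordinate. -/
def qC (n : ℕ) (v : CParam n) : Fin (n + 1) → ℂ :=
  (ccol n 1 v 0) • ccol n 0 v - (ccol n 0 v 0) • ccol n 1 v

/-- Representative of a second point of `l_C = Γ ∩ Span(C)`, so that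
`u ↦ qC + u • rC` parametrizes `l_C` with `q_C` at `u = 0`. -/
def rC (n : ℕ) (v : CParam n) : Fin (n + 1) → ℂ :=
  (ccol n 2 v 0) • ccol n 0 v - (ccol n 0 v 0) • ccol n 2 v

/-- Restriction of a form `f` to the line `l_C`, in the affine coordinate `u`
of the parametrization `u ↦ qC + u • rC` (so `q_C` is at `u = 0`). -/
def restrictLine (n : ℕ) (v : CParam n) (f : MvPolynomial (Fin (n + 1)) ℂ) :
    Polynomial ℂ :=
  MvPolynomial.eval₂ Polynomial.C
    (fun idx => Polynomial.C (qC n v idx) + Polynomial.C (rC n v idx) * Polynomial.X) f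

/-- Restriction of a form `f` to the conic, in the affine coordinate `u` of
the parametrization `u ↦ A(ver(1,u)) = A(1, u, u²)` (the marked point `p` is
at `u = 0`). -/
def restrictConic (n : ℕ) (v : CParam n) (f : MvPolynomial (Fin (n + 1)) ℂ) :
    Polynomial ℂ :=
  MvPolynomial.eval₂ Polynomial.C
    (fun idx => Polynomial.C (v (idx, 0)) + Polynomial.C (v (idx, 1)) * Polynomial.X +
      Polynomial.C (v (idx, 2)) * Polynomial.X ^ 2) f

/-!
STATEMENT 7: Let `C ⊆ ℙⁿ` be a smooth conic through `p = (1:0:⋯:0)` spanning a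
2-plane `P`, let `Γ = {x₀ = 0}`, `l_C = Γ ∩ P` and `q_C = Γ ∩ T_pC`.  If `f`
is a homogeneous form of degree `i` on `Γ` whose restriction to `l_C` has a
zero of order `j` at `q_C`, then the section `x₀^{d−i}·f` of `O(d)` restricts
on `C` to a section with a zero of order exactly `i + j` at `p`.

Orders of vanishing are root multiplicities at `u = 0` of the restricted
polynomials in the affine parametrizations above.
-/

theorem statement7 (n d i j : ℕ) (hn : 2 ≤ n) (hd : 2 ≤ d)
    (hji : j ≤ i) (hi : 1 ≤ i) (hid : i ≤ d)
    (v : CParam n) (hv : IsSmoothConicParam n v)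
    -- the marked point of the conic is `p = (1:0:⋯:0)`
    (hmark : ∃ c : ℂ, c ≠ 0 ∧ ccol n 0 v = c • (fun k : Fin (n + 1) => if k = 0 then (1 : ℂ) else 0))
    (f : MvPolynomial (Fin (n + 1)) ℂ)
    (hf : f ∈ MvPolynomial.homogeneousSubmodule (Fin (n + 1)) ℂ i)
    -- `f` is a form on `Γ = {x₀ = 0}`: no monomial involves `x₀`
    (hfΓ : ∀ mo ∈ f.support, mo 0 = 0)
    -- `f` restricted to `l_C` has a zero of order (exactly) `j` at `q_C`
    (hordj : restrictLine n v f ≠ 0 ∧ (restrictLine n v f).rootMultiplicity 0 = j) :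
    restrictConic n v ((MvPolynomial.X 0 : MvPolynomial (Fin (n + 1)) ℂ) ^ (d - i) * f) ≠ 0 ∧
      (restrictConic n v ((MvPolynomial.X 0 : MvPolynomial (Fin (n + 1)) ℂ) ^ (d - i) * f)).rootMultiplicity 0
        = i + j := by
  obtain ⟨c, hc, hcol⟩ := hmark
  obtain ⟨hfl, hj⟩ := hordj
  -- the zeroth column of `v`
  have hcol0 : ∀ k : Fin (n + 1), v (k, 0) = if k = 0 then c else 0 := by
    intro k
    have := congrFun hcol k
    simp only [ccol, Pi.smul_apply, smul_eq_mul] at this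
    rw [this]; split <;> simp
  -- the common "reduced" polynomial
  set g : Polynomial ℂ := MvPolynomial.eval₂ Polynomial.C
      (fun idx => Polynomial.C (v (idx, 1)) + Polynomial.C (v (idx, 2)) * Polynomial.X) f
      with hgdef
  -- degrees of monomials in the support of `f`
  have hdeg : ∀ mo ∈ f.support, ∑ idx ∈ mo.support, mo idx = i := by
    intro mo hmo
    by_contra h
    exact (MvPolynomial.mem_support_iff.mp hmo)
      (((MvPolynomial.mem_homogeneousSubmodule _ _).mp hf).coeff_eq_zero h)
  -- indices appearing in monomials of `f` are nonzero
  have hsupp0 : ∀ mo ∈ f.support, ∀ idx ∈ mo.support, idx ≠ (0 : Fin (n + 1)) := by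
    intro mo hmo idx hidx h0
    exact (Finsupp.mem_support_iff.mp hidx) (h0 ▸ hfΓ mo hmo)
  -- values of the representatives of `q_C` and `r_C` away from index 0
  have hq : ∀ idx : Fin (n + 1), idx ≠ 0 → qC n v idx = -c * v (idx, 1) := by
    intro idx h
    have h1 : qC n v idx = v (0, 1) * v (idx, 0) - v (0, 0) * v (idx, 1) := rfl
    rw [h1, hcol0 idx, hcol0 0, if_neg h, if_pos rfl]; ring
  have hr : ∀ idx : Fin (n + 1), idx ≠ 0 → rC n v idx = -c * v (idx, 2) := by
    intro idx h
    have h1 : rC n v idx = v (0, 2) * v (idx, 0) - v (0, 0) * v (idx, 2) := rfl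
    rw [h1, hcol0 idx, hcol0 0, if_neg h, if_pos rfl]; ring
  -- restriction of `f` to the conic is `X ^ i * g`
  have hA : restrictConic n v f = Polynomial.X ^ i * g := by
    rw [restrictConic, hgdef, MvPolynomial.eval₂_eq, MvPolynomial.eval₂_eq, Finset.mul_sum]
    refine Finset.sum_congr rfl fun mo hmo => ?_
    rw [show ∀ a b : Polynomial ℂ, Polynomial.X ^ i * (a * b) = a * (Polynomial.X ^ i * b)
      from fun a b => by ring]
    congr 1
    calc ∏ idx ∈ mo.support,
          (Polynomial.C (v (idx, 0)) + Polynomial.C (v (idx, 1)) * Polynomial.X +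
            Polynomial.C (v (idx, 2)) * Polynomial.X ^ 2) ^ mo idx
        = ∏ idx ∈ mo.support,
            (Polynomial.X * (Polynomial.C (v (idx, 1)) + Polynomial.C (v (idx, 2)) *
              Polynomial.X)) ^ mo idx := by
          refine Finset.prod_congr rfl fun idx hidx => ?_
          rw [hcol0 idx, if_neg (hsupp0 mo hmo idx hidx), map_zero, zero_add]
          ring
      _ = Polynomial.X ^ i * ∏ idx ∈ mo.support,
            (Polynomial.C (v (idx, 1)) + Polynomial.C (v (idx, 2)) * Polynomial.X) ^ mo idx := by
          rw [← hdeg mo hmo]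
          simp only [mul_pow, Finset.prod_mul_distrib, Finset.prod_pow_eq_pow_sum]
  -- restriction of `f` to the line is `C ((-c) ^ i) * g`
  have hB : restrictLine n v f = Polynomial.C ((-c) ^ i) * g := by
    rw [restrictLine, hgdef, MvPolynomial.eval₂_eq, MvPolynomial.eval₂_eq, Finset.mul_sum]
    refine Finset.sum_congr rfl fun mo hmo => ?_
    rw [show ∀ a b : Polynomial ℂ, Polynomial.C ((-c) ^ i) * (a * b) =
      a * (Polynomial.C ((-c) ^ i) * b) from fun a b => by ring]
    congr 1
    calc ∏ idx ∈ mo.support,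
          (Polynomial.C (qC n v idx) + Polynomial.C (rC n v idx) * Polynomial.X) ^ mo idx
        = ∏ idx ∈ mo.support,
            (Polynomial.C (-c) * (Polynomial.C (v (idx, 1)) + Polynomial.C (v (idx, 2)) *
              Polynomial.X)) ^ mo idx := by
          refine Finset.prod_congr rfl fun idx hidx => ?_
          rw [hq idx (hsupp0 mo hmo idx hidx), hr idx (hsupp0 mo hmo idx hidx),
            map_mul, map_mul]
          ring
      _ = Polynomial.C ((-c) ^ i) * ∏ idx ∈ mo.support,
            (Polynomial.C (v (idx, 1)) + Polynomial.C (v (idx, 2)) * Polynomial.X) ^ mo idx := by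
          rw [← hdeg mo hmo]
          simp only [mul_pow, Finset.prod_mul_distrib, Finset.prod_pow_eq_pow_sum, map_pow]
  have hci : ((-c) ^ i : ℂ) ≠ 0 := pow_ne_zero _ (neg_ne_zero.mpr hc)
  -- `g` is nonzero with root multiplicity `j` at 0
  have hg0 : g ≠ 0 := by
    intro h
    apply hfl
    rw [hB, h, mul_zero]
  have hgj : g.rootMultiplicity 0 = j := by
    have hC0 : (Polynomial.C ((-c) ^ i)).rootMultiplicity 0 = 0 := by
      apply Polynomial.rootMultiplicity_eq_zero
      simp [Polynomial.IsRoot, hci]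
    have hmul : Polynomial.C ((-c) ^ i) * g ≠ 0 :=
      mul_ne_zero (by simpa using hci) hg0
    have := Polynomial.rootMultiplicity_mul (x := (0 : ℂ)) hmul
    rw [← hB, hj, hC0, zero_add] at this
    omega
  -- restriction of `X 0` to the conic
  set Q : Polynomial ℂ := Polynomial.C c + Polynomial.C (v (0, 1)) * Polynomial.X +
    Polynomial.C (v (0, 2)) * Polynomial.X ^ 2 with hQdef
  have hQ : restrictConic n v (MvPolynomial.X 0) = Q := by
    rw [restrictConic, MvPolynomial.eval₂_X, hcol0 0, if_pos rfl]
  have hQeval : Q.eval 0 = c := by simp [hQdef]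
  have hQ0 : Q ≠ 0 := by
    intro h
    rw [h] at hQeval
    simp at hQeval
    exact hc hQeval.symm
  have hQmult : Q.rootMultiplicity 0 = 0 := by
    apply Polynomial.rootMultiplicity_eq_zero
    simp [Polynomial.IsRoot, hQeval, hc]
  -- split the restriction of the full section
  have hsplit : restrictConic n v
      ((MvPolynomial.X 0 : MvPolynomial (Fin (n + 1)) ℂ) ^ (d - i) * f)
      = Q ^ (d - i) * (Polynomial.X ^ i * g) := by
    rw [restrictConic, MvPolynomial.eval₂_mul, MvPolynomial.eval₂_pow]
    rw [← restrictConic, ← restrictConic, hQ, hA]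
  have hXpow : (Polynomial.X ^ i : Polynomial ℂ).rootMultiplicity 0 = i := by
    have := Polynomial.rootMultiplicity_X_sub_C_pow (R := ℂ) 0 i
    simpa using this
  have hQpow0 : (Q ^ (d - i)) ≠ 0 := pow_ne_zero _ hQ0
  have hXpow0 : (Polynomial.X ^ i : Polynomial ℂ) ≠ 0 := pow_ne_zero _ Polynomial.X_ne_zero
  have hQpowmult : (Q ^ (d - i)).rootMultiplicity 0 = 0 := by
    apply Polynomial.rootMultiplicity_eq_zero
    simp [Polynomial.IsRoot, hQeval, hc]
  have hne : Q ^ (d - i) * (Polynomial.X ^ i * g) ≠ 0 :=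
    mul_ne_zero hQpow0 (mul_ne_zero hXpow0 hg0)
  constructor
  · rw [hsplit]; exact hne
  · rw [hsplit, Polynomial.rootMultiplicity_mul (x := (0 : ℂ)) hne,
      Polynomial.rootMultiplicity_mul (x := (0 : ℂ)) (mul_ne_zero hXpow0 hg0),
      hQpowmult, hXpow, hgj, zero_add]

end
end
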